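/- If R is an FGFC ring and S is a multiplicatively closed subset of R, then the localization R_S is an FGFC ring. -/

import Mathlib

def IsFGFC (R : Type*) [CommRing R] : Prop :=
  ∀ I : Ideal R, I.FG → I.minimalPrimes.Finite

theorem stmt_3 {R : Type*} [CommRing R] (hR : IsFGFC R)
    (S : Submonoid R) : IsFGFC (Localization S) := by
  intro I hI
  set f : R →+* Localization S := algebraMap R (Localization S) with hf
  obtain ⟨s, hs⟩ := hI
  -- clear denominators: for each generator x find r with x * t = f r
  choose rt hrt using fun x : Localization S => IsLocalization.surj (M := S) x
  set r : Localization S → R := fun x => (rt x).1 with hr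
  set t : Localization S → S := fun x => (rt x).2 with ht
  set J : Ideal R := Ideal.span ((fun x => r x) '' (s : Set (Localization S))) with hJ
  classical
  have hJfg : J.FG := ⟨s.image (fun x => r x), by rw [hJ, Finset.coe_image]⟩
  have hmapJ : Ideal.map f J = I := by
    apply le_antisymm
    · rw [Ideal.map_le_iff_le_comap, hJ, Ideal.span_le]
      rintro _ ⟨x, hx, rfl⟩
      have hxI : x ∈ I := hs ▸ Ideal.subset_span hx
      have : f (r x) ∈ I := by
        rw [← hrt x]; exact I.mul_mem_right _ hxI
      exact this
    · rw [← hs, Ideal.span_le]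
      intro x hx
      have hu : IsUnit (f (t x)) := IsLocalization.map_units (Localization S) (t x)
      have hr : f (r x) ∈ Ideal.map f J := Ideal.mem_map_of_mem f
        (Ideal.subset_span ⟨x, hx, rfl⟩)
      have : x * f (t x) ∈ Ideal.map f J := hrt x ▸ hr
      obtain ⟨u, hu⟩ := hu
      have hx' : x = x * f (t x) * ↑u⁻¹ := by rw [← hu, mul_assoc, Units.mul_inv, mul_one]
      rw [hx']
      exact Ideal.mul_mem_right _ _ this
  -- minimal primes of I inject into minimal primes of J via comap
  have key : I.minimalPrimes ⊆ (Ideal.map f) '' J.minimalPrimes := by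
    intro p hp
    obtain ⟨⟨hpprime, hIp⟩, hpmin⟩ := hp
    refine ⟨p.comap f, ⟨⟨Ideal.comap_isPrime f p, ?_⟩, ?_⟩,
      IsLocalization.map_comap S (Localization S) p⟩
    · rw [← Ideal.map_le_iff_le_comap, hmapJ]; exact hIp
    · rintro q ⟨hqprime, hJq⟩ hq
      have hdisj : Disjoint (S : Set R) (q : Set R) := by
        have := ((IsLocalization.isPrime_iff_isPrime_disjoint S (Localization S) p).mp
          hpprime).2
        exact Set.disjoint_of_subset_right hq this
      have hmapq : (Ideal.map f q).IsPrime :=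
        IsLocalization.isPrime_of_isPrime_disjoint S (Localization S) q hqprime hdisj
      have h1 : I ≤ Ideal.map f q := by rw [← hmapJ]; exact Ideal.map_mono hJq
      have h2 : Ideal.map f q ≤ p := by
        have := Ideal.map_mono hq (f := f)
        rwa [IsLocalization.map_comap S (Localization S) p] at this
      have h3 : p ≤ Ideal.map f q := hpmin ⟨hmapq, h1⟩ h2
      calc p.comap f ≤ (Ideal.map f q).comap f := Ideal.comap_mono h3
        _ = q := IsLocalization.comap_map_of_isPrime_disjoint S (Localization S)
            hqprime hdisj
  exact ((hR J hJfg).image _).subset key
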